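/- For any permutation π of {1,...,n}, the excedance difference dexc(π) is at most the inversion number inv(π), and inv(π) is at most 2·dexc(π) − exc(π), where exc(π) is the number of excedances. -/

import Mathlib

open Finset

def exc {n : ℕ} (π : Equiv.Perm (Fin n)) : ℕ :=
  (univ.filter (fun i => i < π i)).card

def dexc {n : ℕ} (π : Equiv.Perm (Fin n)) : ℕ :=
  ∑ i ∈ univ.filter (fun i => i < π i), ((π i : ℕ) - (i : ℕ))

def inv {n : ℕ} (π : Equiv.Perm (Fin n)) : ℕ :=
  (univ.filter (fun p : Fin n × Fin n => p.1 < p.2 ∧ π p.2 < π p.1)).card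

lemma inv_eq_sum {n : ℕ} (π : Equiv.Perm (Fin n)) :
    inv π = ∑ i : Fin n, ((univ.filter (fun j => i < j ∧ π j < π i)).card) := by
  rw [inv, Finset.card_eq_sum_card_fiberwise (f := Prod.fst) (t := univ)
    (fun x _ => mem_univ _)]
  refine Finset.sum_congr rfl (fun i _ => ?_)
  refine Finset.card_bij (fun p _ => p.2) ?_ ?_ ?_
  · rintro ⟨a, b⟩ hp
    simp only [mem_filter, mem_univ, true_and] at hp ⊢
    obtain ⟨⟨h1, h2⟩, h3⟩ := hp
    subst h3; exact ⟨h1, h2⟩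
  · rintro ⟨a, b⟩ ha ⟨c, d⟩ hc h
    simp only [mem_filter] at ha hc
    simp only at h
    simp [Prod.ext_iff, h, ha.2, hc.2]
  · intro j hj
    simp only [mem_filter, mem_univ, true_and] at hj
    exact ⟨(i, j), by simp [hj.1, hj.2], rfl⟩

lemma key1 {n : ℕ} (π : Equiv.Perm (Fin n)) (i : Fin n) :
    (π i : ℕ) - (i : ℕ) ≤ (univ.filter (fun j => i < j ∧ π j < π i)).card := by
  classical
  set A : Finset (Fin n) := univ.filter (fun v => v < π i) with hA
  have hAcard : A.card = (π i : ℕ) := by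
    have : A = Finset.Iio (π i) := by ext v; simp [hA, Finset.mem_Iio]
    rw [this, Fin.card_Iio]
  set A1 : Finset (Fin n) := A.filter (fun v => π.symm v ≤ i) with hA1
  set A2 : Finset (Fin n) := A.filter (fun v => ¬ π.symm v ≤ i) with hA2
  have hsplit : A1.card + A2.card = (π i : ℕ) := by
    rw [← hAcard, hA1, hA2, Finset.card_filter_add_card_filter_not]
  have h1 : A1.card ≤ (i : ℕ) := by
    have : A1.card ≤ (Finset.Iio i).card := by
      apply Finset.card_le_card_of_injOn (fun v => π.symm v)
      · intro v hv
        simp only [hA1, hA, mem_coe, mem_filter, mem_univ, true_and] at hv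
        rw [Finset.mem_coe, Finset.mem_Iio]
        rcases lt_or_eq_of_le hv.2 with h | h
        · exact h
        · exfalso
          have : v = π i := by
            have := congrArg π h
            simpa using this
          exact absurd (this ▸ hv.1) (lt_irrefl _)
      · intro a _ b _ h
        exact π.symm.injective h
    simpa [Fin.card_Iio] using this
  have h2 : A2.card ≤ (univ.filter (fun j => i < j ∧ π j < π i)).card := by
    apply Finset.card_le_card_of_injOn (fun v => π.symm v)
    · intro v hv
      simp only [hA2, hA, mem_coe, mem_filter, mem_univ, true_and, not_le] at hv
      simp only [mem_coe, mem_filter, mem_univ, true_and]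
      refine ⟨hv.2, ?_⟩
      simpa using hv.1
    · intro a _ b _ h
      exact π.symm.injective h
  omega

lemma part1 {n : ℕ} (π : Equiv.Perm (Fin n)) : dexc π ≤ inv π := by
  rw [inv_eq_sum, dexc]
  calc ∑ i ∈ univ.filter (fun i => i < π i), ((π i : ℕ) - (i : ℕ))
      ≤ ∑ i ∈ univ.filter (fun i => i < π i),
          ((univ.filter (fun j => i < j ∧ π j < π i)).card) :=
        Finset.sum_le_sum (fun i _ => key1 π i)
    _ ≤ ∑ i : Fin n, ((univ.filter (fun j => i < j ∧ π j < π i)).card) :=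
        Finset.sum_le_sum_of_subset (Finset.filter_subset _ _)

lemma swap_val {n : ℕ} {k k' x : Fin n} :
    ((Equiv.swap k k' x : Fin n) : ℕ) =
      if (x : ℕ) = (k : ℕ) then (k' : ℕ) else if (x : ℕ) = (k' : ℕ) then (k : ℕ) else (x : ℕ) := by
  rcases eq_or_ne x k with rfl | h1
  · simp [Equiv.swap_apply_left]
  · rcases eq_or_ne x k' with rfl | h2
    · simp [Equiv.swap_apply_right, (Fin.val_ne_iff).mpr h1]
    · simp [Equiv.swap_apply_of_ne_of_ne h1 h2, (Fin.val_ne_iff).mpr h1,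
        (Fin.val_ne_iff).mpr h2]

lemma swap_lt {n : ℕ} {k k' : Fin n} (hkk' : (k' : ℕ) = (k : ℕ) + 1) {i j : Fin n}
    (hij : i < j) (hne : ¬(i = k ∧ j = k')) :
    Equiv.swap k k' i < Equiv.swap k k' j := by
  have h1 := swap_val (k := k) (k' := k') (x := i)
  have h2 := swap_val (k := k) (k' := k') (x := j)
  have hne' : ¬((i : ℕ) = (k : ℕ) ∧ (j : ℕ) = (k' : ℕ)) := by
    simpa [Fin.ext_iff] using hne
  have hij' : (i : ℕ) < (j : ℕ) := hij
  rw [Fin.lt_iff_val_lt_val]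
  split_ifs at h1 h2 <;> omega

lemma inv_swap {n : ℕ} (π : Equiv.Perm (Fin n)) {k k' : Fin n}
    (hkk' : (k' : ℕ) = (k : ℕ) + 1) (hd : π k' < π k) :
    inv (π * Equiv.swap k k') + 1 = inv π := by
  classical
  set s := Equiv.swap k k' with hs
  have hklt : k < k' := by rw [Fin.lt_iff_val_lt_val]; omega
  have hsk : s k = k' := Equiv.swap_apply_left k k'
  have hsk' : s k' = k := Equiv.swap_apply_right k k'
  have hmem : (k, k') ∈ univ.filter
      (fun p : Fin n × Fin n => p.1 < p.2 ∧ π p.2 < π p.1) := by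
    simp [hklt, hd]
  have hcard : inv (π * s) = ((univ.filter
      (fun p : Fin n × Fin n => p.1 < p.2 ∧ π p.2 < π p.1)).erase (k, k')).card := by
    rw [inv]
    refine Finset.card_bij' (fun p _ => (s p.1, s p.2)) (fun p _ => (s p.1, s p.2))
      ?_ ?_ ?_ ?_
    · rintro ⟨a, b⟩ hp
      rw [mem_filter] at hp
      simp only [mem_filter, mem_univ, true_and, Equiv.Perm.mul_apply] at hp
      obtain ⟨hab, hπ⟩ := hp
      have hne : ¬(a = k ∧ b = k') := by
        rintro ⟨rfl, rfl⟩
        rw [hsk, hsk'] at hπ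
        exact absurd hπ (asymm hd)
      simp only [Finset.mem_erase, mem_filter, mem_univ, true_and]
      refine ⟨?_, swap_lt hkk' hab hne, hπ⟩
      intro h
      simp only [Prod.mk.injEq] at h
      obtain ⟨h1, h2⟩ := h
      have ha : a = k' := by
        apply Equiv.injective s; rw [h1, hsk']
      have hb : b = k := by
        apply Equiv.injective s; rw [h2, hsk]
      rw [ha, hb] at hab
      exact absurd hab (asymm hklt)
    · rintro ⟨a, b⟩ hp
      simp only [Finset.mem_erase, mem_filter, mem_univ, true_and] at hp
      obtain ⟨hne0, hab, hπ⟩ := hp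
      have hne : ¬(a = k ∧ b = k') := by
        rintro ⟨rfl, rfl⟩; exact hne0 rfl
      rw [mem_filter]
      simp only [mem_filter, mem_univ, true_and, Equiv.Perm.mul_apply]
      constructor
      · exact swap_lt hkk' hab hne
      · rw [Equiv.swap_apply_self, Equiv.swap_apply_self]
        exact hπ
    · rintro ⟨a, b⟩ _
      exact Prod.ext (Equiv.swap_apply_self _ _ _) (Equiv.swap_apply_self _ _ _)
    · rintro ⟨a, b⟩ _
      exact Prod.ext (Equiv.swap_apply_self _ _ _) (Equiv.swap_apply_self _ _ _)
  rw [hcard, Finset.card_erase_of_mem hmem, inv]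
  have : 0 < (univ.filter
      (fun p : Fin n × Fin n => p.1 < p.2 ∧ π p.2 < π p.1)).card :=
    Finset.card_pos.mpr ⟨(k, k'), hmem⟩
  omega

lemma sum_split {n : ℕ} {k k' : Fin n} (hne : k ≠ k') (f g : Fin n → ℕ)
    (h : ∀ i, i ≠ k → i ≠ k' → f i = g i) :
    (∑ i, f i) + g k + g k' = (∑ i, g i) + f k + f k' := by
  have hk' : k' ∈ (univ : Finset (Fin n)).erase k := by
    simp [hne.symm]
  rw [← Finset.add_sum_erase _ f (mem_univ k), ← Finset.add_sum_erase _ f hk',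
      ← Finset.add_sum_erase _ g (mem_univ k), ← Finset.add_sum_erase _ g hk']
  have heq : ∑ i ∈ ((univ : Finset (Fin n)).erase k).erase k', f i
      = ∑ i ∈ ((univ : Finset (Fin n)).erase k).erase k', g i := by
    refine Finset.sum_congr rfl (fun i hi => ?_)
    simp only [Finset.mem_erase] at hi
    exact h i hi.2.1 hi.1
  omega

lemma exists_k {n : ℕ} (π : Equiv.Perm (Fin n)) (hπ : π ≠ 1) :
    ∃ k : Fin n, k < π k ∧ ∀ j, k < j → π j ≤ j := by
  classical
  have hne : (univ.filter (fun i : Fin n => i < π i)).Nonempty := by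
    by_contra h
    rw [Finset.not_nonempty_iff_eq_empty, Finset.filter_eq_empty_iff] at h
    apply hπ
    have hall : ∀ i : Fin n, (π i : ℕ) ≤ (i : ℕ) := by
      intro i
      have := h (mem_univ i)
      rw [not_lt] at this
      exact this
    have hsum : ∑ i : Fin n, (π i : ℕ) = ∑ i : Fin n, (i : ℕ) :=
      Equiv.sum_comp π (fun i => (i : ℕ))
    have := (Finset.sum_eq_sum_iff_of_le (fun i _ => hall i)).mp hsum
    ext x
    exact this x (mem_univ x)
  set S := univ.filter (fun i : Fin n => i < π i) with hS
  refine ⟨S.max' hne, ?_, ?_⟩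
  · have := S.max'_mem hne
    simp only [hS, mem_filter] at this
    exact this.2
  · intro j hj
    by_contra hcon
    rw [not_le] at hcon
    have : j ∈ S := by rw [hS, mem_filter]; exact ⟨mem_univ _, hcon⟩
    exact absurd (S.le_max' j this) (not_le.mpr hj)

lemma exc_eq_sum {n : ℕ} (π : Equiv.Perm (Fin n)) :
    exc π = ∑ i : Fin n, (if i < π i then 1 else 0) := by
  rw [exc, Finset.card_filter]

lemma dexc_eq_sum {n : ℕ} (π : Equiv.Perm (Fin n)) :
    dexc π = ∑ i : Fin n, (if i < π i then (π i : ℕ) - (i : ℕ) else 0) := by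
  rw [dexc, Finset.sum_filter]

lemma part2 {n : ℕ} : ∀ m (π : Equiv.Perm (Fin n)), inv π = m →
    inv π + exc π ≤ 2 * dexc π := by
  intro m
  induction m using Nat.strong_induction_on with
  | _ m ih =>
    intro π hm
    by_cases h1 : π = 1
    · subst h1
      have hinv : inv (1 : Equiv.Perm (Fin n)) = 0 := by
        rw [inv, Finset.card_eq_zero, Finset.filter_eq_empty_iff]
        rintro ⟨a, b⟩ - ⟨h, h'⟩
        exact absurd h' (asymm h)
      have hexc : exc (1 : Equiv.Perm (Fin n)) = 0 := by
        rw [exc, Finset.card_eq_zero, Finset.filter_eq_empty_iff]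
        intro i _
        exact lt_irrefl i
      omega
    · obtain ⟨k, hk, hmax⟩ := exists_k π h1
      have hkval : (k : ℕ) < (π k : ℕ) := hk
      have hk1n : (k : ℕ) + 1 < n := by
        have h2 := (π k).isLt
        omega
      set k' : Fin n := ⟨(k : ℕ) + 1, hk1n⟩ with hk'def
      have hkk' : (k' : ℕ) = (k : ℕ) + 1 := rfl
      have hkltk' : k < k' := by rw [Fin.lt_iff_val_lt_val]; omega
      have hbF : π k' ≤ k' := hmax k' hkltk'
      have hbval : (π k' : ℕ) ≤ (k : ℕ) + 1 := hbF
      have hneab : (π k' : ℕ) ≠ (π k : ℕ) := by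
        intro h
        exact absurd (π.injective (Fin.val_injective h)) hkltk'.ne'
      have hdsc : π k' < π k := by
        rw [Fin.lt_iff_val_lt_val]; omega
      set σ : Equiv.Perm (Fin n) := π * Equiv.swap k k' with hσ
      have hσk : σ k = π k' := by
        rw [hσ, Equiv.Perm.mul_apply, Equiv.swap_apply_left]
      have hσk' : σ k' = π k := by
        rw [hσ, Equiv.Perm.mul_apply, Equiv.swap_apply_right]
      have hσi : ∀ i, i ≠ k → i ≠ k' → σ i = π i := by
        intro i hik hik'
        rw [hσ, Equiv.Perm.mul_apply, Equiv.swap_apply_of_ne_of_ne hik hik']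
      have hinv : inv σ + 1 = inv π := inv_swap π hkk' hdsc
      have hIH : inv σ + exc σ ≤ 2 * dexc σ := ih (inv σ) (by omega) σ rfl
      have Hexc : exc σ + (if k < π k then 1 else 0) + (if k' < π k' then 1 else 0)
          = exc π + (if k < σ k then 1 else 0) + (if k' < σ k' then 1 else 0) := by
        rw [exc_eq_sum, exc_eq_sum]
        exact sum_split hkltk'.ne (fun i => if i < σ i then 1 else 0)
          (fun i => if i < π i then 1 else 0)
          (fun i h2 h3 => by simp only [hσi i h2 h3])
      have Hdexc : dexc σ + (if k < π k then (π k : ℕ) - (k : ℕ) else 0)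
            + (if k' < π k' then (π k' : ℕ) - (k' : ℕ) else 0)
          = dexc π + (if k < σ k then (σ k : ℕ) - (k : ℕ) else 0)
            + (if k' < σ k' then (σ k' : ℕ) - (k' : ℕ) else 0) := by
        rw [dexc_eq_sum, dexc_eq_sum]
        exact sum_split hkltk'.ne (fun i => if i < σ i then (σ i : ℕ) - (i : ℕ) else 0)
          (fun i => if i < π i then (π i : ℕ) - (i : ℕ) else 0)
          (fun i h2 h3 => by simp only [hσi i h2 h3])
      rw [hσk, hσk', if_pos hk, if_neg (not_lt.mpr hbF)] at Hexc Hdexc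
      by_cases hc1 : k < π k'
      · have hc1v : (k : ℕ) < (π k' : ℕ) := hc1
        by_cases hc2 : k' < π k
        · have hc2v : (k : ℕ) + 1 < (π k : ℕ) := hc2
          rw [if_pos hc1, if_pos hc2] at Hexc Hdexc
          omega
        · have hc2v : ¬ (k : ℕ) + 1 < (π k : ℕ) := fun h => hc2 (by
            rw [Fin.lt_iff_val_lt_val]; omega)
          rw [if_pos hc1, if_neg hc2] at Hexc Hdexc
          omega
      · have hc1v : ¬ (k : ℕ) < (π k' : ℕ) := fun h => hc1 (by
          rw [Fin.lt_iff_val_lt_val]; omega)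
        by_cases hc2 : k' < π k
        · have hc2v : (k : ℕ) + 1 < (π k : ℕ) := hc2
          rw [if_neg hc1, if_pos hc2] at Hexc Hdexc
          omega
        · have hc2v : ¬ (k : ℕ) + 1 < (π k : ℕ) := fun h => hc2 (by
            rw [Fin.lt_iff_val_lt_val]; omega)
          rw [if_neg hc1, if_neg hc2] at Hexc Hdexc
          omega


theorem dexc_le_inv_and_inv_le {n : ℕ} (π : Equiv.Perm (Fin n)) :
    dexc π ≤ inv π ∧ inv π + exc π ≤ 2 * dexc π :=
  ⟨part1 π, part2 (inv π) π rfl⟩
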